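/- arXiv:1904.11182 — 4 statements merged into one kernel-verified Lean document; each statement's English description precedes it below -/
import Mathlib

section
/- Let K : S × S → ℂ be a positive semidefinite kernel on a finite set S with a distinguished point s₀ ∈ S satisfying K(s₀,s₀) = 1. Then there exists a family of complex-valued square-integrable random variables (X_s)_{s ∈ S} on some probability space with X_{s₀} ≡ 1 almost surely, such that K(s,t) = 𝔼(X_s · conj(X_t)) for all s, t ∈ S. -/
open Matrix ComplexOrder MeasureTheory

private lemma kernel_split_aux {S : Type*} [Fintype S] (K M : S → S → ℂ) (s₀ : S)
    (hMM : ∀ s t, ∑ u, M s u * (starRingEnd ℂ) (M t u) = K s t)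
    (h₀ : K s₀ s₀ = 1) (s t : S) :
    K s s₀ * (starRingEnd ℂ) (K t s₀)
      + ∑ u, (M s u - K s s₀ * M s₀ u) * (starRingEnd ℂ) (M t u - K t s₀ * M s₀ u)
      = K s t := by
  have hsym : ∑ u, M s₀ u * (starRingEnd ℂ) (M t u) = (starRingEnd ℂ) (K t s₀) := by
    rw [← hMM t s₀, map_sum]
    refine Finset.sum_congr rfl fun u _ => ?_
    simp [mul_comm]
  have expand : ∀ u, (M s u - K s s₀ * M s₀ u) * (starRingEnd ℂ) (M t u - K t s₀ * M s₀ u)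
      = M s u * (starRingEnd ℂ) (M t u)
        - (starRingEnd ℂ) (K t s₀) * (M s u * (starRingEnd ℂ) (M s₀ u))
        - K s s₀ * (M s₀ u * (starRingEnd ℂ) (M t u))
        + K s s₀ * (starRingEnd ℂ) (K t s₀) * (M s₀ u * (starRingEnd ℂ) (M s₀ u)) := by
    intro u
    simp only [map_sub, _root_.map_mul]
    ring
  rw [Finset.sum_congr rfl (fun u _ => expand u)]
  simp only [Finset.sum_add_distrib, Finset.sum_sub_distrib, ← Finset.mul_sum]
  rw [hMM s t, hMM s s₀, hMM s₀ s₀, hsym, h₀]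
  ring

theorem kernel_second_moment_representation
    {S : Type*} [Fintype S] (K : S → S → ℂ) (s₀ : S)
    (hK : ∀ (k : ℕ) (σ : Fin k → S),
      (Matrix.of fun i j => K (σ i) (σ j)).PosSemidef)
    (h₀ : K s₀ s₀ = 1) :
    ∃ (Ω : Type) (_ : MeasurableSpace Ω) (μ : Measure Ω) (_ : IsProbabilityMeasure μ)
      (X : S → Ω → ℂ),
      (∀ s, MemLp (X s) 2 μ) ∧
      (X s₀ =ᵐ[μ] fun _ => 1) ∧
      (∀ s t, K s t = ∫ ω, X s ω * (starRingEnd ℂ) (X t ω) ∂μ) := by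
  classical
  haveI : Nonempty S := ⟨s₀⟩
  -- the full matrix of K is positive semidefinite
  have hKmat : (Matrix.of K).PosSemidef := by
    have h := (hK (Fintype.card S) (Fintype.equivFin S).symm).submatrix (Fintype.equivFin S)
    have heq : ((Matrix.of fun i j => K ((Fintype.equivFin S).symm i)
        ((Fintype.equivFin S).symm j)).submatrix (Fintype.equivFin S) (Fintype.equivFin S))
        = Matrix.of K := by
      ext s t
      simp [Matrix.submatrix_apply]
    rwa [heq] at h
  set M : Matrix S S ℂ := (open scoped MatrixOrder Matrix.Norms.L2Operator in CFC.sqrt (Matrix.of K)) with hMdef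
  have hMH : M.IsHermitian := by
    open scoped MatrixOrder Matrix.Norms.L2Operator in
    exact (CFC.sqrt_nonneg (Matrix.of K)).posSemidef.isHermitian
  have hMM : ∀ s t, ∑ u, M s u * (starRingEnd ℂ) (M t u) = K s t := by
    intro s t
    have h1 : (M * M) s t = K s t := by
      open scoped MatrixOrder Matrix.Norms.L2Operator in
      rw [hMdef, CFC.sqrt_mul_sqrt_self _ hKmat.nonneg]; rfl
    rw [← h1, Matrix.mul_apply]
    refine Finset.sum_congr rfl fun u _ => ?_
    rw [← hMH.apply u t]
    rfl
  have hkey := kernel_split_aux K (fun s u => M s u) s₀ hMM h₀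
  -- set up the probability space
  set n : ℕ := Fintype.card S with hn
  have hn0 : (n : ℂ) ≠ 0 := Nat.cast_ne_zero.mpr Fintype.card_pos.ne'
  set c : ℂ := ((Real.sqrt n : ℝ) : ℂ) with hc
  have hc2 : c * c = (n : ℂ) := by
    rw [hc, ← Complex.ofReal_mul, Real.mul_self_sqrt (Nat.cast_nonneg n)]
    norm_num
  have hcconj : (starRingEnd ℂ) c = c := Complex.conj_ofReal _
  set e : S ≃ Fin n := Fintype.equivFin S with he
  set mΩ : MeasurableSpace (Fin n × Bool) := ⊤ with hmΩ
  haveI : MeasurableSingletonClass (Fin n × Bool) := ⟨fun _ => trivial⟩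
  set μ : Measure (Fin n × Bool) := (PMF.uniformOfFintype (Fin n × Bool)).toMeasure with hμdef
  haveI : IsProbabilityMeasure μ := PMF.toMeasure.isProbabilityMeasure _
  set ε : Bool → ℂ := fun b => if b then 1 else -1 with hε
  set B : S → S → ℂ := fun s u => M s u - K s s₀ * M s₀ u with hB
  set X : S → Fin n × Bool → ℂ := fun s ω => K s s₀ + ε ω.2 * c * B s (e.symm ω.1) with hX
  have hXmeas : ∀ s, Measurable (X s) := fun s _ _ => trivial
  refine ⟨Fin n × Bool, mΩ, μ, inferInstance, X, ?_, ?_, ?_⟩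
  · intro s
    obtain ⟨C, hC⟩ : ∃ C, ∀ ω, ‖X s ω‖ ≤ C :=
      ⟨∑ ω, ‖X s ω‖, fun ω => Finset.single_le_sum (f := fun ω => ‖X s ω‖) (a := ω)
        (fun _ _ => norm_nonneg _) (Finset.mem_univ ω)⟩
    exact (memLp_top_of_bound (hXmeas s).aestronglyMeasurable C
      (Filter.Eventually.of_forall hC)).mono_exponent le_top
  · refine Filter.Eventually.of_forall fun ω => ?_
    simp only [hX, hB, h₀, one_mul, sub_self, mul_zero]
    ring
  · intro s t
    have hint : Integrable (fun ω => X s ω * (starRingEnd ℂ) (X t ω)) μ :=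
      Integrable.of_finite
    rw [integral_fintype hint]
    simp only [measureReal_def]
    have hμω : ∀ ω : Fin n × Bool, ((μ {ω}).toReal : ℂ) = ((2 * n : ℂ))⁻¹ := by
      intro ω
      rw [hμdef, PMF.toMeasure_apply_singleton _ _ (measurableSet_singleton ω)]
      simp [PMF.uniformOfFintype_apply, Fintype.card_prod, Fintype.card_bool]
      ring
    have hsmul : ∀ ω : Fin n × Bool, (μ {ω}).toReal • (X s ω * (starRingEnd ℂ) (X t ω))
        = ((2 * n : ℂ))⁻¹ * (X s ω * (starRingEnd ℂ) (X t ω)) := by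
      intro ω
      rw [Complex.real_smul, hμω]
    rw [Finset.sum_congr rfl fun ω _ => hsmul ω, ← Finset.mul_sum]
    rw [Fintype.sum_prod_type]
    have hpt : ∀ v : Fin n, (∑ b : Bool, X s (v, b) * (starRingEnd ℂ) (X t (v, b)))
        = 2 * (K s s₀ * (starRingEnd ℂ) (K t s₀))
          + 2 * (n : ℂ) * (B s (e.symm v) * (starRingEnd ℂ) (B t (e.symm v))) := by
      intro v
      have hXt : ∀ r : S, X r (v, true) = K r s₀ + c * B r (e.symm v) := by
        intro r; simp [hX, hε]
      have hXf : ∀ r : S, X r (v, false) = K r s₀ - c * B r (e.symm v) := by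
        intro r; simp only [hX, hε, Bool.false_eq_true, if_false, hB]; ring
      rw [Fintype.sum_bool, hXt, hXf, hXt, hXf]
      simp only [map_add, map_sub, _root_.map_mul, hcconj]
      linear_combination (2 : ℂ) * B s (e.symm v) * (starRingEnd ℂ) (B t (e.symm v)) * hc2
    rw [Finset.sum_congr rfl fun v _ => hpt v]
    rw [Finset.sum_add_distrib, Finset.sum_const, ← Finset.mul_sum]
    have hsum : ∑ v : Fin n, B s (e.symm v) * (starRingEnd ℂ) (B t (e.symm v))
        = K s t - K s s₀ * (starRingEnd ℂ) (K t s₀) := by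
      rw [Equiv.sum_comp e.symm (fun u => B s u * (starRingEnd ℂ) (B t u))]
      rw [← hkey s t]
      ring
    rw [hsum]
    simp only [Finset.card_univ, Fintype.card_fin, nsmul_eq_mul]
    field_simp
    ring
end

section
/- Let Σ₁, Σ₂ be sets with Σ₁ ∩ Σ₂ = {x₀}, and let K₁, K₂ be positive semidefinite kernels on Σ₁, Σ₂ respectively with K₁(x₀,x₀) = K₂(x₀,x₀) = 1. Then the Markov product K₁ *_{x₀} K₂, the kernel on Σ₁ ∪ Σ₂ defined by restricting to K_i on Σ_i × Σ_i and by (σ₁,σ₂) ↦ K₁(σ₁,x₀)·K₂(x₀,σ₂) for σ₁ ∈ Σ₁, σ₂ ∈ Σ₂ (with the conjugate-symmetric value on (σ₂,σ₁)), is a positive semidefinite kernel on Σ₁ ∪ Σ₂. -/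
open Matrix ComplexOrder

/-- A kernel `K` is positive semidefinite on a set `S` if every finite Gram matrix
built from points of `S` is positive semidefinite. -/
def IsPosSemidefKernelOn {X : Type*} (S : Set X) (K : X → X → ℂ) : Prop :=
  ∀ (k : ℕ) (σ : Fin k → X), (∀ i, σ i ∈ S) →
    (Matrix.of fun i j => K (σ i) (σ j)).PosSemidef

/-- The Markov product of two kernels `K₁`, `K₂` on sets `S₁`, `S₂` meeting at `x₀`. -/
noncomputable def markovProduct {X : Type*} (S₁ : Set X) (x₀ : X)
    (K₁ K₂ : X → X → ℂ) : X → X → ℂ := fun σ τ =>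
  open scoped Classical in
  if σ ∈ S₁ then
    if τ ∈ S₁ then K₁ σ τ else K₁ σ x₀ * K₂ x₀ τ
  else
    if τ ∈ S₁ then (starRingEnd ℂ) (K₁ τ x₀ * K₂ x₀ σ) else K₂ σ τ

/-- Hermitian symmetry of a positive semidefinite kernel. -/
lemma kernel_symm {X : Type*} {S : Set X} {K : X → X → ℂ}
    (h : IsPosSemidefKernelOn S K) {σ τ : X} (hσ : σ ∈ S) (hτ : τ ∈ S) :
    K σ τ = (starRingEnd ℂ) (K τ σ) := by
  have := (h 2 ![σ, τ] (by intro i; fin_cases i <;> simpa)).1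
  have := congrFun (congrFun this 0) 1
  simpa [Matrix.conjTranspose_apply, RCLike.star_def] using this.symm

/-- A rank-one Gram matrix is positive semidefinite. -/
lemma rankOne_psd {k : ℕ} (c : Fin k → ℂ) :
    (Matrix.of fun i j => c i * (starRingEnd ℂ) (c j)).PosSemidef := by
  rw [posSemidef_iff_dotProduct_mulVec]
  constructor
  · ext i j
    simp [Matrix.conjTranspose_apply, RCLike.star_def, mul_comm]
  · intro x
    have : (star x) ⬝ᵥ ((Matrix.of fun i j => c i * (starRingEnd ℂ) (c j)) *ᵥ x)
        = (∑ i, (starRingEnd ℂ) (x i) * c i) *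
            (starRingEnd ℂ) (∑ i, (starRingEnd ℂ) (x i) * c i) := by
      simp only [dotProduct, mulVec, Matrix.of_apply, map_sum, _root_.map_mul,
        Complex.conj_conj, Finset.mul_sum, Finset.sum_mul, Pi.star_apply, RCLike.star_def]
      rw [Finset.sum_comm]
      apply Finset.sum_congr rfl; intro i _
      apply Finset.sum_congr rfl; intro j _
      ring
    rw [this, Complex.mul_conj]
    exact_mod_cast Complex.normSq_nonneg _

/-- The Schur complement kernel at a base point is positive semidefinite. -/
lemma schur_psd {X : Type*} {S : Set X} {K : X → X → ℂ}
    (h : IsPosSemidefKernelOn S K) {x₀ : X} (hx₀ : x₀ ∈ S) (h0 : K x₀ x₀ = 1)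
    {k : ℕ} (τ : Fin k → X) (hτ : ∀ i, τ i ∈ S) :
    (Matrix.of fun i j => K (τ i) (τ j) - K (τ i) x₀ * K x₀ (τ j)).PosSemidef := by
  rw [posSemidef_iff_dotProduct_mulVec]
  constructor
  · ext i j
    simp only [Matrix.conjTranspose_apply, Matrix.of_apply, RCLike.star_def, map_sub,
      _root_.map_mul]
    rw [kernel_symm h (hτ i) (hτ j), kernel_symm h (hτ i) hx₀, kernel_symm h hx₀ (hτ j)]
    ring
  · intro x
    set t : ℂ := ∑ j, K x₀ (τ j) * x j with ht
    set ρ : Fin (k+1) → X := Fin.snoc τ x₀ with hρ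
    set y : Fin (k+1) → ℂ := Fin.snoc x (-t) with hy
    have hG := (h (k+1) ρ (by
      intro i
      refine Fin.lastCases ?_ ?_ i
      · simpa [hρ] using hx₀
      · intro i; simpa [hρ] using hτ i)).dotProduct_mulVec_nonneg y
    have key : (star y) ⬝ᵥ ((Matrix.of fun i j => K (ρ i) (ρ j)) *ᵥ y)
        = (star x) ⬝ᵥ ((Matrix.of fun i j =>
            K (τ i) (τ j) - K (τ i) x₀ * K x₀ (τ j)) *ᵥ x) := by
      simp only [dotProduct, mulVec, Matrix.of_apply, Pi.star_apply, hρ, hy,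
        Fin.sum_univ_castSucc, Fin.snoc_castSucc, Fin.snoc_last, h0, RCLike.star_def]
      rw [← ht]
      simp only [one_mul, add_neg_cancel, mul_zero, add_zero]
      apply Finset.sum_congr rfl
      intro i _
      congr 1
      rw [ht]
      simp only [sub_mul, Finset.sum_sub_distrib, Finset.mul_sum, mul_neg, ← sub_eq_add_neg]
      congr 1
      apply Finset.sum_congr rfl; intro j _; ring
    rw [← key]
    exact hG

theorem markovProduct_posSemidef {X : Type*} (S₁ S₂ : Set X) (x₀ : X)
    (hint : S₁ ∩ S₂ = {x₀})
    (K₁ K₂ : X → X → ℂ)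
    (h₁ : IsPosSemidefKernelOn S₁ K₁) (h₂ : IsPosSemidefKernelOn S₂ K₂)
    (h₁₀ : K₁ x₀ x₀ = 1) (h₂₀ : K₂ x₀ x₀ = 1) :
    IsPosSemidefKernelOn (S₁ ∪ S₂) (markovProduct S₁ x₀ K₁ K₂) := by
  classical
  have hx : x₀ ∈ S₁ ∩ S₂ := by rw [hint]; rfl
  have hx₁ : x₀ ∈ S₁ := hx.1
  have hx₂ : x₀ ∈ S₂ := hx.2
  intro k σ hσ
  set τ₁ : Fin k → X := fun i => if σ i ∈ S₁ then σ i else x₀ with hτ₁def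
  set τ₂ : Fin k → X := fun i => if σ i ∈ S₁ then x₀ else σ i with hτ₂def
  set c : Fin k → ℂ := fun i =>
    if σ i ∈ S₁ then K₁ (σ i) x₀ else (starRingEnd ℂ) (K₂ x₀ (σ i)) with hcdef
  have hτ₁ : ∀ i, τ₁ i ∈ S₁ := by
    intro i; by_cases hi : σ i ∈ S₁ <;> simp [hτ₁def, hi, hx₁]
  have hτ₂ : ∀ i, τ₂ i ∈ S₂ := by
    intro i; by_cases hi : σ i ∈ S₁ <;> simp [hτ₂def, hi, hx₂, (hσ i).resolve_left]
  have P₁ := schur_psd h₁ hx₁ h₁₀ τ₁ hτ₁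
  have P₂ := schur_psd h₂ hx₂ h₂₀ τ₂ hτ₂
  have PC := rankOne_psd c
  have key : (Matrix.of fun i j => markovProduct S₁ x₀ K₁ K₂ (σ i) (σ j))
      = (Matrix.of fun i j => K₁ (τ₁ i) (τ₁ j) - K₁ (τ₁ i) x₀ * K₁ x₀ (τ₁ j))
        + (Matrix.of fun i j => K₂ (τ₂ i) (τ₂ j) - K₂ (τ₂ i) x₀ * K₂ x₀ (τ₂ j))
        + (Matrix.of fun i j => c i * (starRingEnd ℂ) (c j)) := by
    ext i j
    by_cases hi : σ i ∈ S₁ <;> by_cases hj : σ j ∈ S₁ <;>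
      simp only [Matrix.add_apply, Matrix.of_apply, markovProduct, hτ₁def, hτ₂def, hcdef,
        hi, hj, if_pos, if_neg, if_true, if_false, not_false_iff, h₁₀, h₂₀,
        Complex.conj_conj, _root_.map_mul]
    · rw [kernel_symm h₁ hx₁ hj]; ring
    · ring
    · ring
    · rw [kernel_symm h₂ ((hσ i).resolve_left hi) hx₂]; ring
  rw [key]
  exact (P₁.add P₂).add PC
end

section
/- Let Σ₁, Σ₂ be sets with Σ₁ ∩ Σ₂ = {x₀}, and let K₁, K₂ be positive semidefinite kernels on Σ₁, Σ₂ such that K_i(σ,σ) = 1 for all σ ∈ Σ_i (i = 1,2). Then the Markov product K₁ *_{x₀} K₂ is a positive semidefinite kernel on Σ₁ ∪ Σ₂ with all diagonal values equal to 1. -/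
open Matrix ComplexOrder

section BozejkoAux
variable {X : Type*}

lemma quad_expand {k : ℕ} (K : X → X → ℂ) (σ : Fin k → X) (x : Fin k → ℂ) :
    star x ⬝ᵥ (Matrix.of fun i j => K (σ i) (σ j)) *ᵥ x
      = ∑ i, ∑ j, (starRingEnd ℂ) (x i) * K (σ i) (σ j) * x j := by
  simp only [dotProduct, mulVec, Matrix.of_apply, Pi.star_apply, Finset.mul_sum,
    mul_assoc, starRingEnd_apply]

lemma herm {S : Set X} {K : X → X → ℂ} (h : IsPosSemidefKernelOn S K)
    {a b : X} (ha : a ∈ S) (hb : b ∈ S) :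
    (starRingEnd ℂ) (K a b) = K b a := by
  have hp := (h 2 ![a, b] (by intro i; fin_cases i <;> assumption)).1
  have h2 : ((Matrix.of fun i j => K (![a,b] i) (![a,b] j))ᴴ) 1 0
      = (Matrix.of fun i j => K (![a,b] i) (![a,b] j)) 1 0 := by rw [hp]
  simpa only [Matrix.conjTranspose_apply, Matrix.of_apply, Matrix.cons_val_one,
    Matrix.cons_val_zero, Matrix.head_cons, starRingEnd_apply] using h2

lemma schur_quad {S : Set X} {K : X → X → ℂ} (h : IsPosSemidefKernelOn S K)
    {x₀ : X} (hx : x₀ ∈ S) (hK : K x₀ x₀ = 1) {k : ℕ} (σ : Fin k → X)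
    (hσ : ∀ i, σ i ∈ S) (x : Fin k → ℂ) :
    0 ≤ ∑ i, ∑ j, (starRingEnd ℂ) (x i)
        * (K (σ i) (σ j) - K (σ i) x₀ * K x₀ (σ j)) * x j := by
  classical
  set c : ℂ := ∑ j, K x₀ (σ j) * x j with hc
  set σ' : Fin (k+1) → X := Fin.snoc σ x₀ with hσ'def
  set y : Fin (k+1) → ℂ := Fin.snoc x (-c) with hydef
  have hσ' : ∀ i, σ' i ∈ S := by
    intro i
    refine Fin.lastCases ?_ ?_ i
    · simpa [σ'] using hx
    · intro j; simpa [σ'] using hσ j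
  have h0 : 0 ≤ ∑ i, ∑ j, (starRingEnd ℂ) (y i) * K (σ' i) (σ' j) * y j := by
    have := (h (k+1) σ' hσ').dotProduct_mulVec_nonneg y
    rwa [quad_expand] at this
  have hconjc : (starRingEnd ℂ) c = ∑ i, (starRingEnd ℂ) (x i) * K (σ i) x₀ := by
    rw [hc, map_sum]
    refine Finset.sum_congr rfl fun i _ => ?_
    rw [_root_.map_mul, herm h hx (hσ i)]
    ring
  have hsum : ∑ i, ∑ j, (starRingEnd ℂ) (y i) * K (σ' i) (σ' j) * y j
      = (∑ i, ∑ j, (starRingEnd ℂ) (x i) * K (σ i) (σ j) * x j)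
        - (starRingEnd ℂ) c * c := by
    rw [Fin.sum_univ_castSucc]
    simp only [Fin.sum_univ_castSucc (n := k)]
    simp only [σ', y, Fin.snoc_castSucc, Fin.snoc_last, hK, mul_one]
    rw [Finset.sum_add_distrib]
    have e1 : ∑ i, (starRingEnd ℂ) (x i) * K (σ i) x₀ * (-c)
        = -((starRingEnd ℂ) c * c) := by
      rw [← Finset.sum_mul, ← hconjc]; ring
    have e2 : ∑ j, (starRingEnd ℂ) (-c) * K x₀ (σ j) * x j
        = -((starRingEnd ℂ) c * c) := by
      simp only [mul_assoc]
      rw [← Finset.mul_sum, ← hc, map_neg]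
      ring
    rw [e1, e2]
    have e3 : (starRingEnd ℂ) (-c) * -c = (starRingEnd ℂ) c * c := by
      rw [map_neg]; ring
    rw [e3]
    ring
  have htarget : ∑ i, ∑ j, (starRingEnd ℂ) (x i)
        * (K (σ i) (σ j) - K (σ i) x₀ * K x₀ (σ j)) * x j
      = (∑ i, ∑ j, (starRingEnd ℂ) (x i) * K (σ i) (σ j) * x j)
        - (starRingEnd ℂ) c * c := by
    rw [hconjc, hc, Finset.sum_mul, ← Finset.sum_sub_distrib]
    refine Finset.sum_congr rfl fun i _ => ?_
    rw [Finset.mul_sum, ← Finset.sum_sub_distrib]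
    refine Finset.sum_congr rfl fun j _ => ?_
    ring
  rw [htarget, ← hsum]
  exact h0

end BozejkoAux

/-- Bożejko's original extension theorem (1989). -/
theorem bozejko_markovProduct_posSemidef {X : Type*} (S₁ S₂ : Set X) (x₀ : X)
    (hint : S₁ ∩ S₂ = {x₀})
    (K₁ K₂ : X → X → ℂ)
    (h₁ : IsPosSemidefKernelOn S₁ K₁) (h₂ : IsPosSemidefKernelOn S₂ K₂)
    (hd₁ : ∀ σ ∈ S₁, K₁ σ σ = 1) (hd₂ : ∀ σ ∈ S₂, K₂ σ σ = 1) :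
    IsPosSemidefKernelOn (S₁ ∪ S₂) (markovProduct S₁ x₀ K₁ K₂) ∧
      ∀ σ ∈ S₁ ∪ S₂, markovProduct S₁ x₀ K₁ K₂ σ σ = 1 := by
  classical
  have hx0 : x₀ ∈ S₁ ∩ S₂ := by rw [hint]; exact rfl
  have hx1 : x₀ ∈ S₁ := hx0.1
  have hx2 : x₀ ∈ S₂ := hx0.2
  constructor
  · intro k σ hσ
    -- membership in S₂ for points not in S₁
    have hmem2 : ∀ i, σ i ∉ S₁ → σ i ∈ S₂ := fun i hi => (hσ i).resolve_left hi
    refine Matrix.PosSemidef.of_dotProduct_mulVec_nonneg ?_ ?_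
    · -- Hermitian
      ext i j
      simp only [Matrix.conjTranspose_apply, Matrix.of_apply]
      by_cases hi : σ i ∈ S₁ <;> by_cases hj : σ j ∈ S₁ <;>
        simp only [markovProduct, hi, hj, if_true, if_false, ite_true, ite_false,
          ← starRingEnd_apply]
      · exact herm h₁ hj hi
      · exact Complex.conj_conj _
      · exact herm h₂ (hmem2 j hj) (hmem2 i hi)
    · intro x
      rw [quad_expand]
      set σ₁ : Fin k → X := fun i => if σ i ∈ S₁ then σ i else x₀ with hσ₁
      set σ₂ : Fin k → X := fun i => if σ i ∈ S₁ then x₀ else σ i with hσ₂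
      set x₁ : Fin k → ℂ := fun i => if σ i ∈ S₁ then x i else 0 with hx₁
      set x₂ : Fin k → ℂ := fun i => if σ i ∈ S₁ then 0 else x i with hx₂
      set ψ : Fin k → ℂ := fun i => (starRingEnd ℂ) (x i)
        * (if σ i ∈ S₁ then K₁ (σ i) x₀ else K₂ (σ i) x₀) with hψ
      have hσ₁S : ∀ i, σ₁ i ∈ S₁ := by
        intro i; by_cases hi : σ i ∈ S₁ <;> simp [hσ₁, hi, hx1]
      have hσ₂S : ∀ i, σ₂ i ∈ S₂ := by
        intro i; simp only [hσ₂]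
        by_cases hi : σ i ∈ S₁
        · simp [hi, hx2]
        · simpa [hi] using hmem2 i hi
      have key : ∀ i j, (starRingEnd ℂ) (x i)
            * markovProduct S₁ x₀ K₁ K₂ (σ i) (σ j) * x j
          = (starRingEnd ℂ) (x₁ i)
              * (K₁ (σ₁ i) (σ₁ j) - K₁ (σ₁ i) x₀ * K₁ x₀ (σ₁ j)) * x₁ j
            + (starRingEnd ℂ) (x₂ i)
              * (K₂ (σ₂ i) (σ₂ j) - K₂ (σ₂ i) x₀ * K₂ x₀ (σ₂ j)) * x₂ j
            + ψ i * (starRingEnd ℂ) (ψ j) := by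
        intro i j
        by_cases hi : σ i ∈ S₁ <;> by_cases hj : σ j ∈ S₁ <;>
          simp only [markovProduct, hσ₁, hσ₂, hx₁, hx₂, hψ, hi, hj, if_true,
            if_false, ite_true, ite_false, map_zero, zero_mul, mul_zero,
            add_zero, zero_add, _root_.map_mul]
        · rw [← herm h₁ hj hx1]; simp only [Complex.conj_conj]; ring
        · rw [← herm h₂ (hmem2 j hj) hx2]; simp only [Complex.conj_conj]; ring
        · rw [herm h₂ hx2 (hmem2 i hi)]; simp only [Complex.conj_conj]; ring
        · rw [← herm h₂ (hmem2 j hj) hx2]; simp only [Complex.conj_conj]; ring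
      calc (0:ℂ) ≤ (∑ i, ∑ j, (starRingEnd ℂ) (x₁ i)
              * (K₁ (σ₁ i) (σ₁ j) - K₁ (σ₁ i) x₀ * K₁ x₀ (σ₁ j)) * x₁ j)
            + (∑ i, ∑ j, (starRingEnd ℂ) (x₂ i)
              * (K₂ (σ₂ i) (σ₂ j) - K₂ (σ₂ i) x₀ * K₂ x₀ (σ₂ j)) * x₂ j)
            + (∑ i, ψ i) * (starRingEnd ℂ) (∑ i, ψ i) := by
              have t1 := schur_quad h₁ hx1 (hd₁ x₀ hx1) σ₁ hσ₁S x₁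
              have t2 := schur_quad h₂ hx2 (hd₂ x₀ hx2) σ₂ hσ₂S x₂
              have t3 : (0:ℂ) ≤ (∑ i, ψ i) * (starRingEnd ℂ) (∑ i, ψ i) := by
                rw [starRingEnd_apply]
                exact mul_star_self_nonneg _
              have := add_le_add (add_le_add t1 t2) t3
              simpa using this
        _ = ∑ i, ∑ j, (starRingEnd ℂ) (x i)
              * markovProduct S₁ x₀ K₁ K₂ (σ i) (σ j) * x j := by
              rw [map_sum, Finset.sum_mul]
              simp only [Finset.mul_sum]
              rw [← Finset.sum_add_distrib, ← Finset.sum_add_distrib]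
              refine Finset.sum_congr rfl fun i _ => ?_
              rw [← Finset.sum_add_distrib, ← Finset.sum_add_distrib]
              exact Finset.sum_congr rfl fun j _ => (key i j).symm
  · intro σ hσ
    by_cases hs : σ ∈ S₁
    · simp only [markovProduct, hs, if_true, ite_true]
      exact hd₁ σ hs
    · simp only [markovProduct, hs, if_false, ite_false]
      exact hd₂ σ (hσ.resolve_left hs)
end

section
/- Let K₁, K₂ be positive semidefinite kernels on finite sets Σ₁, Σ₂ with Σ₁ ∩ Σ₂ = {x₀} and K₁(x₀,x₀) = K₂(x₀,x₀) = 1. Write L_i(s,t) = K_i(s,t) − K_i(s,x₀)K_i(x₀,t) for s,t ∈ Σ_i \ {x₀}, and let L be the block-diagonal kernel on (Σ₁ ∪ Σ₂) \ {x₀} equal to L_i on (Σ_i \ {x₀})² and zero on cross blocks. Let v : Σ₁ ∪ Σ₂ → ℂ be v(σ) = K₁(σ,x₀) for σ ∈ Σ₁ and v(σ) = conj(K₂(x₀,σ)) for σ ∈ Σ₂. Then for all σ, τ ∈ Σ₁ ∪ Σ₂: (K₁ *_{x₀} K₂)(σ,τ) = L̃(σ,τ) + v(σ)·conj(v(τ)),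 where L̃ extends L by zero to rows/columns indexed by x₀. In particular K₁ *_{x₀} K₂ is positive semidefinite, being the sum of two positive semidefinite kernels. -/
open Matrix ComplexOrder

/-- The block-diagonal Schur-complement kernel `L`, extended by zero to `x₀`. -/
noncomputable def schurBlockKernel {X : Type*} (S₁ S₂ : Set X) (x₀ : X)
    (K₁ K₂ : X → X → ℂ) : X → X → ℂ := fun σ τ =>
  open scoped Classical in
  if σ = x₀ ∨ τ = x₀ then 0
  else if σ ∈ S₁ ∧ τ ∈ S₁ then K₁ σ τ - K₁ σ x₀ * K₁ x₀ τ
  else if σ ∈ S₂ ∧ τ ∈ S₂ then K₂ σ τ - K₂ σ x₀ * K₂ x₀ τ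
  else 0

/-- The rank-one vector `v`. -/
noncomputable def rankOneVec {X : Type*} (S₁ : Set X) (x₀ : X)
    (K₁ K₂ : X → X → ℂ) : X → ℂ := fun σ =>
  open scoped Classical in
  if σ ∈ S₁ then K₁ σ x₀ else (starRingEnd ℂ) (K₂ x₀ σ)

lemma herm_of_psdKernel {X : Type*} {S : Set X} {K : X → X → ℂ}
    (h : IsPosSemidefKernelOn S K) {s t : X} (hs : s ∈ S) (ht : t ∈ S) :
    (starRingEnd ℂ) (K s t) = K t s := by
  have h2 := (h 2 ![s, t] (Fin.forall_fin_two.mpr ⟨hs, ht⟩)).1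
  have h3 := congrFun (congrFun h2 1) 0
  simp only [Matrix.conjTranspose_apply, Matrix.of_apply, Matrix.cons_val_one,
    Matrix.cons_val_zero, Matrix.head_cons] at h3
  exact h3

lemma qform_eq {k : ℕ} (M : Matrix (Fin k) (Fin k) ℂ) (x : Fin k → ℂ) :
    star x ⬝ᵥ M *ᵥ x = ∑ i, ∑ j, star (x i) * M i j * x j := by
  simp [dotProduct, mulVec, Finset.mul_sum, mul_assoc]

lemma schur_psdKernel {X : Type*} {S : Set X} {x₀ : X} {K : X → X → ℂ}
    (h : IsPosSemidefKernelOn S K) (hx : x₀ ∈ S) (h0 : K x₀ x₀ = 1) :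
    IsPosSemidefKernelOn S (fun s t => K s t - K s x₀ * K x₀ t) := by
  intro k σ hσ
  set σ' : Fin (k+1) → X := Fin.cons x₀ σ with hσ'def
  have hσ' : ∀ i, σ' i ∈ S := by
    intro i
    induction i using Fin.cases with
    | zero => simpa [hσ'def] using hx
    | succ j => simpa [hσ'def] using hσ j
  rw [Matrix.posSemidef_iff_dotProduct_mulVec]
  constructor
  · ext i j
    simp only [Matrix.conjTranspose_apply, Matrix.of_apply, ← starRingEnd_apply,
      map_sub, _root_.map_mul]
    rw [herm_of_psdKernel h (hσ j) (hσ i), herm_of_psdKernel h (hσ j) hx,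
      herm_of_psdKernel h hx (hσ i)]
    ring
  · intro x
    let s : ℂ := ∑ j, K x₀ (σ j) * x j
    let T : ℂ := ∑ i, star (x i) * K (σ i) x₀
    let Q : ℂ := ∑ i, ∑ j, star (x i) * K (σ i) (σ j) * x j
    set x' : Fin (k+1) → ℂ := Fin.cons (-s) x with hx'def
    have key := (Matrix.posSemidef_iff_dotProduct_mulVec.mp (h (k+1) σ' hσ')).2 x'
    rw [qform_eq] at key
    rw [qform_eq]
    have hlhs : (∑ i, ∑ j, star (x' i) *
          Matrix.of (fun i j => K (σ' i) (σ' j)) i j * x' j) = Q - T * s := by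
      simp only [hσ'def, hx'def, Fin.sum_univ_succ, Fin.cons_zero, Fin.cons_succ,
        Matrix.of_apply, h0]
      have e2 : ∑ j, star (-s) * K x₀ (σ j) * x j = star (-s) * s := by
        rw [Finset.mul_sum]
        exact Finset.sum_congr rfl fun j _ => by ring
      have e3 : ∑ i, star (x i) * K (σ i) x₀ * (-s) = T * (-s) := by
        rw [Finset.sum_mul]
      rw [Finset.sum_add_distrib, e2, e3]
      simp only [Q]
      ring
    have hrhs : (∑ i, ∑ j, star (x i) *
          Matrix.of (fun i j => K (σ i) (σ j) - K (σ i) x₀ * K x₀ (σ j)) i j * x j)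
          = Q - T * s := by
      simp only [Matrix.of_apply]
      have e1 : ∀ i ∈ Finset.univ, ∑ j, star (x i) * (K (σ i) (σ j) - K (σ i) x₀ * K x₀ (σ j)) * x j
          = (∑ j, star (x i) * K (σ i) (σ j) * x j)
            - star (x i) * K (σ i) x₀ * s := by
        intro i _
        rw [Finset.mul_sum, ← Finset.sum_sub_distrib]
        exact Finset.sum_congr rfl fun j _ => by ring
      rw [Finset.sum_congr rfl e1, Finset.sum_sub_distrib, Finset.sum_mul]
    rw [hrhs]
    rw [hlhs] at key
    exact key

lemma markov_pointwise
    {X : Type*} (S₁ S₂ : Set X) (x₀ : X) (hint : S₁ ∩ S₂ = {x₀})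
    (K₁ K₂ : X → X → ℂ)
    (h₁ : IsPosSemidefKernelOn S₁ K₁) (h₂ : IsPosSemidefKernelOn S₂ K₂)
    (h₁₀ : K₁ x₀ x₀ = 1) (h₂₀ : K₂ x₀ x₀ = 1) :
    ∀ σ ∈ S₁ ∪ S₂, ∀ τ ∈ S₁ ∪ S₂,
      markovProduct S₁ x₀ K₁ K₂ σ τ =
        schurBlockKernel S₁ S₂ x₀ K₁ K₂ σ τ +
          rankOneVec S₁ x₀ K₁ K₂ σ * (starRingEnd ℂ) (rankOneVec S₁ x₀ K₁ K₂ τ) := by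
  classical
  have hx1 : x₀ ∈ S₁ := by
    have h : x₀ ∈ S₁ ∩ S₂ := by rw [hint]; exact rfl
    exact h.1
  have hx2 : x₀ ∈ S₂ := by
    have h : x₀ ∈ S₁ ∩ S₂ := by rw [hint]; exact rfl
    exact h.2
  have huniq : ∀ y, y ∈ S₁ → y ∈ S₂ → y = x₀ := fun y hy1 hy2 => by
    have h : y ∈ S₁ ∩ S₂ := ⟨hy1, hy2⟩
    rwa [hint, Set.mem_singleton_iff] at h
  intro σ hσ τ hτ
  by_cases hσ1 : σ ∈ S₁
  · by_cases hτ1 : τ ∈ S₁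
    · -- both in S₁
      by_cases hσ0 : σ = x₀
      · simp only [markovProduct, schurBlockKernel, rankOneVec, hσ0, hx1, hτ1,
          if_true, eq_self_iff_true, true_or, if_pos, h₁₀, _root_.map_one, one_mul, zero_add]
        exact (herm_of_psdKernel h₁ hτ1 hx1).symm
      · by_cases hτ0 : τ = x₀
        · simp only [markovProduct, schurBlockKernel, rankOneVec, hτ0, hx1, hσ1,
            if_true, eq_self_iff_true, or_true, if_pos, h₁₀, _root_.map_one, mul_one, zero_add]
        · have hor : ¬(σ = x₀ ∨ τ = x₀) := by tauto
          simp only [markovProduct, schurBlockKernel, rankOneVec, hσ1, hτ1, hor,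
            if_true, if_false, and_self, if_pos]
          rw [herm_of_psdKernel h₁ hτ1 hx1]
          ring
    · -- σ ∈ S₁, τ ∈ S₂ \ S₁
      have hτ2 : τ ∈ S₂ := hτ.resolve_left hτ1
      have hτ0 : τ ≠ x₀ := fun h => hτ1 (h ▸ hx1)
      by_cases hσ0 : σ = x₀
      · simp only [markovProduct, schurBlockKernel, rankOneVec, hσ0, hx1, hτ1,
          if_true, if_false, eq_self_iff_true, true_or, if_pos, h₁₀, one_mul, zero_add,
          starRingEnd_self_apply]
      · have hσ2 : σ ∉ S₂ := fun h => hσ0 (huniq σ hσ1 h)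
        have hor : ¬(σ = x₀ ∨ τ = x₀) := by tauto
        have ha : ¬(σ ∈ S₁ ∧ τ ∈ S₁) := by tauto
        have hb : ¬(σ ∈ S₂ ∧ τ ∈ S₂) := by tauto
        simp only [markovProduct, schurBlockKernel, rankOneVec, hσ1, hτ1, hor, ha, hb,
          if_true, if_false, starRingEnd_self_apply, zero_add, false_and, and_false,
          true_and, and_true, add_zero]
  · -- σ ∈ S₂ \ S₁
    have hσ2 : σ ∈ S₂ := hσ.resolve_left hσ1
    have hσ0 : σ ≠ x₀ := fun h => hσ1 (h ▸ hx1)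
    by_cases hτ1 : τ ∈ S₁
    · by_cases hτ0 : τ = x₀
      · simp only [markovProduct, schurBlockKernel, rankOneVec, hτ0, hx1, hσ1,
          if_true, if_false, eq_self_iff_true, or_true, if_pos, h₁₀, one_mul, zero_add,
          _root_.map_mul, _root_.map_one]
        ring
      · have hτ2 : τ ∉ S₂ := fun h => hτ0 (huniq τ hτ1 h)
        have hor : ¬(σ = x₀ ∨ τ = x₀) := by tauto
        have ha : ¬(σ ∈ S₁ ∧ τ ∈ S₁) := by tauto
        have hb : ¬(σ ∈ S₂ ∧ τ ∈ S₂) := by tauto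
        simp only [markovProduct, schurBlockKernel, rankOneVec, hσ1, hτ1, hor, ha, hb,
          if_true, if_false, _root_.map_mul, zero_add, false_and, and_false,
          true_and, and_true, add_zero]
        ring
    · -- both in S₂ \ S₁
      have hτ2 : τ ∈ S₂ := hτ.resolve_left hτ1
      have hτ0 : τ ≠ x₀ := fun h => hτ1 (h ▸ hx1)
      have hor : ¬(σ = x₀ ∨ τ = x₀) := by tauto
      have ha : ¬(σ ∈ S₁ ∧ τ ∈ S₁) := by tauto
      have hb : σ ∈ S₂ ∧ τ ∈ S₂ := ⟨hσ2, hτ2⟩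
      simp only [markovProduct, schurBlockKernel, rankOneVec, hσ1, hτ1, hor, ha, hb,
        if_true, if_false, and_self, if_pos, starRingEnd_self_apply]
      rw [← herm_of_psdKernel h₂ hx2 hσ2]
      ring

theorem markovProduct_decomposition
    {X : Type*} (S₁ S₂ : Set X) (x₀ : X)
    (hfin₁ : S₁.Finite) (hfin₂ : S₂.Finite) (hint : S₁ ∩ S₂ = {x₀})
    (K₁ K₂ : X → X → ℂ)
    (h₁ : IsPosSemidefKernelOn S₁ K₁) (h₂ : IsPosSemidefKernelOn S₂ K₂)
    (h₁₀ : K₁ x₀ x₀ = 1) (h₂₀ : K₂ x₀ x₀ = 1) :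
    (∀ σ ∈ S₁ ∪ S₂, ∀ τ ∈ S₁ ∪ S₂,
      markovProduct S₁ x₀ K₁ K₂ σ τ =
        schurBlockKernel S₁ S₂ x₀ K₁ K₂ σ τ +
          rankOneVec S₁ x₀ K₁ K₂ σ * (starRingEnd ℂ) (rankOneVec S₁ x₀ K₁ K₂ τ)) ∧
    IsPosSemidefKernelOn (S₁ ∪ S₂) (markovProduct S₁ x₀ K₁ K₂) := by
  classical
  have hx1 : x₀ ∈ S₁ := by
    have h : x₀ ∈ S₁ ∩ S₂ := by rw [hint]; exact rfl
    exact h.1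
  have hx2 : x₀ ∈ S₂ := by
    have h : x₀ ∈ S₁ ∩ S₂ := by rw [hint]; exact rfl
    exact h.2
  have huniq : ∀ y, y ∈ S₁ → y ∈ S₂ → y = x₀ := fun y hy1 hy2 => by
    have h : y ∈ S₁ ∩ S₂ := ⟨hy1, hy2⟩
    rwa [hint, Set.mem_singleton_iff] at h
  have hpt := markov_pointwise S₁ S₂ x₀ hint K₁ K₂ h₁ h₂ h₁₀ h₂₀
  refine ⟨hpt, ?_⟩
  intro k σ hσ
  set v : Fin k → ℂ := fun i => rankOneVec S₁ x₀ K₁ K₂ (σ i) with hvdef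
  set σ₁ : Fin k → X := fun i => if σ i ∈ S₁ then σ i else x₀ with hσ₁def
  set σ₂ : Fin k → X := fun i => if σ i ∈ S₁ then x₀ else σ i with hσ₂def
  set χ₁ : Fin k → ℂ := fun i => if σ i ∈ S₁ then 1 else 0 with hχ₁def
  set χ₂ : Fin k → ℂ := fun i => if σ i ∈ S₁ then 0 else 1 with hχ₂def
  have hσ₁ : ∀ i, σ₁ i ∈ S₁ := fun i => by
    by_cases h : σ i ∈ S₁ <;> simp [hσ₁def, h, hx1]
  have hσ₂ : ∀ i, σ₂ i ∈ S₂ := fun i => by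
    by_cases h : σ i ∈ S₁
    · simp [hσ₂def, h, hx2]
    · simpa [hσ₂def, h] using (hσ i).resolve_left h
  have hG₁ := schur_psdKernel h₁ hx1 h₁₀ k σ₁ hσ₁
  have hG₂ := schur_psdKernel h₂ hx2 h₂₀ k σ₂ hσ₂
  set G₁ : Matrix (Fin k) (Fin k) ℂ :=
    Matrix.of (fun i j => K₁ (σ₁ i) (σ₁ j) - K₁ (σ₁ i) x₀ * K₁ x₀ (σ₁ j)) with hG₁def
  set G₂ : Matrix (Fin k) (Fin k) ℂ :=
    Matrix.of (fun i j => K₂ (σ₂ i) (σ₂ j) - K₂ (σ₂ i) x₀ * K₂ x₀ (σ₂ j)) with hG₂def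
  have hG₁' : G₁.PosSemidef := hG₁
  have hG₂' : G₂.PosSemidef := hG₂
  set A : Matrix (Fin 1) (Fin k) ℂ := Matrix.of fun _ j => star (v j) with hAdef
  have hC₁ := hG₁'.mul_mul_conjTranspose_same (Matrix.diagonal χ₁)
  have hC₂ := hG₂'.mul_mul_conjTranspose_same (Matrix.diagonal χ₂)
  have hB := Matrix.posSemidef_conjTranspose_mul_self A
  have hblocks : ∀ i j, schurBlockKernel S₁ S₂ x₀ K₁ K₂ (σ i) (σ j) =
      χ₁ i * G₁ i j * star (χ₁ j) + χ₂ i * G₂ i j * star (χ₂ j) := by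
    intro i j
    by_cases hi : σ i ∈ S₁ <;> by_cases hj : σ j ∈ S₁
    · -- both S₁
      by_cases hi0 : σ i = x₀
      · simp [schurBlockKernel, hG₁def, hσ₁def, hχ₁def, hχ₂def, hi, hj, hi0, h₁₀]
      · by_cases hj0 : σ j = x₀
        · simp [schurBlockKernel, hG₁def, hσ₁def, hχ₁def, hχ₂def, hi, hj, hj0, h₁₀]
        · simp [schurBlockKernel, hG₁def, hσ₁def, hχ₁def, hχ₂def, hi, hj, hi0, hj0]
    · -- i in S₁, j not
      have hj0 : σ j ≠ x₀ := fun h => hj (h ▸ hx1)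
      by_cases hi0 : σ i = x₀
      · simp [schurBlockKernel, hχ₁def, hχ₂def, hi, hj, hi0, hx1]
      · have hi2 : σ i ∉ S₂ := fun h => hi0 (huniq _ hi h)
        simp [schurBlockKernel, hχ₁def, hχ₂def, hi, hj, hi0, hj0, hi2]
    · -- j in S₁, i not
      have hi0 : σ i ≠ x₀ := fun h => hi (h ▸ hx1)
      by_cases hj0 : σ j = x₀
      · simp [schurBlockKernel, hχ₁def, hχ₂def, hi, hj, hj0, hx1]
      · have hj2 : σ j ∉ S₂ := fun h => hj0 (huniq _ hj h)
        simp [schurBlockKernel, hχ₁def, hχ₂def, hi, hj, hi0, hj0, hj2]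
    · -- both in S₂ \ S₁
      have hi0 : σ i ≠ x₀ := fun h => hi (h ▸ hx1)
      have hj0 : σ j ≠ x₀ := fun h => hj (h ▸ hx1)
      have hi2 : σ i ∈ S₂ := (hσ i).resolve_left hi
      have hj2 : σ j ∈ S₂ := (hσ j).resolve_left hj
      simp [schurBlockKernel, hG₂def, hσ₂def, hχ₁def, hχ₂def, hi, hj, hi0, hj0, hi2, hj2]
  have heq : (Matrix.of fun i j => markovProduct S₁ x₀ K₁ K₂ (σ i) (σ j))
      = (Matrix.diagonal χ₁ * G₁ * (Matrix.diagonal χ₁)ᴴ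
          + Matrix.diagonal χ₂ * G₂ * (Matrix.diagonal χ₂)ᴴ) + Aᴴ * A := by
    ext i j
    have hAij : (Aᴴ * A) i j = v i * star (v j) := by
      simp [hAdef, Matrix.mul_apply, Matrix.conjTranspose_apply, Fin.sum_univ_one]
    simp only [Matrix.add_apply, Matrix.of_apply, Matrix.diagonal_conjTranspose,
      Matrix.diagonal_mul, Matrix.mul_diagonal, hAij]
    rw [hpt (σ i) (hσ i) (σ j) (hσ j), hblocks i j]
    simp only [Matrix.diagonal_mul, Matrix.mul_diagonal, Pi.star_apply, starRingEnd_apply]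
    rfl
  rw [heq]
  exact (hC₁.add hC₂).add hB
end
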